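/- If p ≥ 2 and M > 0, there is a constant c = c(k,p,M) such that for all z, η ∈ ℝ^k with |η| ≤ M: |V_p(z) - V_p(η)| ≤ c |V_p(z - η)|. -/

import Mathlib

open Real

noncomputable def V (p : ℝ) {k : ℕ} (z : EuclideanSpace ℝ (Fin k)) :
    EuclideanSpace ℝ (Fin k) :=
  ((1 + ‖z‖ ^ 2) ^ ((p - 2) / 4)) • z

theorem stmt_6 {k : ℕ} (p : ℝ) (hp : 2 ≤ p) (M : ℝ) (hM : 0 < M) :
    ∃ c : ℝ, 0 < c ∧ ∀ z η : EuclideanSpace ℝ (Fin k), ‖η‖ ≤ M →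
      ‖V p z - V p η‖ ≤ c * ‖V p (z - η)‖ := by
  set α : ℝ := (p - 2) / 4 with hα
  have hα0 : 0 ≤ α := by rw [hα]; linarith
  set E := EuclideanSpace ℝ (Fin k)
  set D : E → (E →L[ℝ] E) := fun x =>
    ((1 + ‖x‖ ^ 2) ^ α) • ContinuousLinearMap.id ℝ E +
      ((α * (1 + ‖x‖ ^ 2) ^ (α - 1)) • (2 • innerSL ℝ x)).smulRight x with hD
  have hpos : ∀ x : E, (0:ℝ) < 1 + ‖x‖ ^ 2 := fun x => by positivity
  have hderiv : ∀ x : E, HasFDerivAt (V p) (D x) x := by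
    intro x
    have h1 : HasFDerivAt (fun y : E => ‖y‖ ^ 2) (2 • innerSL ℝ x) x := by
      simpa using (hasFDerivAt_id x).norm_sq
    have h2 : HasFDerivAt (fun y : E => 1 + ‖y‖ ^ 2) (2 • innerSL ℝ x) x := by
      simpa using h1.const_add 1
    have h3 : HasDerivAt (fun t : ℝ => t ^ α) (α * (1 + ‖x‖ ^ 2) ^ (α - 1)) (1 + ‖x‖ ^ 2) :=
      Real.hasDerivAt_rpow_const (Or.inl (hpos x).ne')
    have h4 : HasFDerivAt (fun y : E => (1 + ‖y‖ ^ 2) ^ α)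
        ((α * (1 + ‖x‖ ^ 2) ^ (α - 1)) • (2 • innerSL ℝ x)) x :=
      by have := h3.comp_hasFDerivAt x h2; exact this
    exact h4.smul (hasFDerivAt_id x)
  have hbound : ∀ (t : ℝ) (x : E), ‖x‖ ≤ t → ‖D x‖ ≤ (1 + 2 * α) * (1 + t ^ 2) ^ α := by
    intro t x hx
    have hA : ‖((1 + ‖x‖ ^ 2) ^ α : ℝ) • ContinuousLinearMap.id ℝ E‖ ≤ (1 + ‖x‖ ^ 2) ^ α := by
      refine (norm_smul_le ((1 + ‖x‖ ^ 2) ^ α : ℝ) (ContinuousLinearMap.id ℝ E)).trans ?_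
      rw [Real.norm_eq_abs, abs_of_pos (Real.rpow_pos_of_pos (hpos x) α)]
      calc (1 + ‖x‖ ^ 2) ^ α * ‖ContinuousLinearMap.id ℝ E‖
          ≤ (1 + ‖x‖ ^ 2) ^ α * 1 :=
            mul_le_mul_of_nonneg_left ContinuousLinearMap.norm_id_le
              (Real.rpow_pos_of_pos (hpos x) α).le
        _ = (1 + ‖x‖ ^ 2) ^ α := mul_one _
    have hL : ‖(2:ℕ) • innerSL ℝ x‖ ≤ 2 * ‖x‖ := by
      calc ‖(2:ℕ) • innerSL ℝ x‖ = ‖innerSL ℝ x + innerSL ℝ x‖ := by rw [two_smul]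
        _ ≤ ‖innerSL ℝ x‖ + ‖innerSL ℝ x‖ := norm_add_le _ _
        _ = 2 * ‖innerSL ℝ x‖ := by ring
        _ ≤ 2 * ‖x‖ := by rw [innerSL_apply_norm]
    have hB : ‖(((α * (1 + ‖x‖ ^ 2) ^ (α - 1)) • (2 • innerSL ℝ x)).smulRight x)‖ ≤
        α * (1 + ‖x‖ ^ 2) ^ (α - 1) * (2 * ‖x‖) * ‖x‖ := by
      rw [ContinuousLinearMap.norm_smulRight_apply, norm_smul, Real.norm_eq_abs,
        abs_of_nonneg (by positivity : (0:ℝ) ≤ α * (1 + ‖x‖ ^ 2) ^ (α - 1))]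
      gcongr <;> first | exact hL | positivity
    have h2 : (1 + ‖x‖ ^ 2) ^ (α - 1) * ‖x‖ ^ 2 ≤ (1 + ‖x‖ ^ 2) ^ α := by
      calc (1 + ‖x‖ ^ 2) ^ (α - 1) * ‖x‖ ^ 2
          ≤ (1 + ‖x‖ ^ 2) ^ (α - 1) * (1 + ‖x‖ ^ 2) :=
            mul_le_mul_of_nonneg_left (by nlinarith [norm_nonneg x])
              (Real.rpow_nonneg (hpos x).le _)
        _ = (1 + ‖x‖ ^ 2) ^ (α - 1 + 1) := (Real.rpow_add_one (hpos x).ne' _).symm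
        _ = (1 + ‖x‖ ^ 2) ^ α := by norm_num
    have h3 : (1 + ‖x‖ ^ 2) ^ α ≤ (1 + t ^ 2) ^ α :=
      Real.rpow_le_rpow (hpos x).le (by nlinarith [norm_nonneg x]) hα0
    have h4 : α * (1 + ‖x‖ ^ 2) ^ (α - 1) * (2 * ‖x‖) * ‖x‖ ≤ 2 * α * (1 + t ^ 2) ^ α := by
      have e : α * (1 + ‖x‖ ^ 2) ^ (α - 1) * (2 * ‖x‖) * ‖x‖
          = 2 * α * ((1 + ‖x‖ ^ 2) ^ (α - 1) * ‖x‖ ^ 2) := by ring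
      rw [e]
      have := h2.trans h3
      nlinarith [this]
    calc ‖D x‖ ≤ ‖((1 + ‖x‖ ^ 2) ^ α : ℝ) • ContinuousLinearMap.id ℝ E‖ +
          ‖(((α * (1 + ‖x‖ ^ 2) ^ (α - 1)) • (2 • innerSL ℝ x)).smulRight x)‖ := by
          rw [hD]; exact norm_add_le _ _
      _ ≤ (1 + ‖x‖ ^ 2) ^ α + α * (1 + ‖x‖ ^ 2) ^ (α - 1) * (2 * ‖x‖) * ‖x‖ :=
          add_le_add hA hB
      _ ≤ (1 + t ^ 2) ^ α + 2 * α * (1 + t ^ 2) ^ α := add_le_add h3 h4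
      _ = (1 + 2 * α) * (1 + t ^ 2) ^ α := by ring
  refine ⟨(1 + 2 * α) * (2 * (1 + M ^ 2)) ^ α,
    mul_pos (by linarith) (Real.rpow_pos_of_pos (by positivity) _), ?_⟩
  intro z η hη
  set d := ‖z - η‖ with hd
  have hd0 : 0 ≤ d := norm_nonneg _
  have hzball : z ∈ Metric.closedBall (0:E) (M + d) := by
    rw [Metric.mem_closedBall, dist_zero_right]
    have h5 : z = η + (z - η) := by abel
    calc ‖z‖ = ‖η + (z - η)‖ := by rw [← h5]
      _ ≤ ‖η‖ + ‖z - η‖ := norm_add_le _ _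
      _ ≤ M + d := by rw [← hd]; exact add_le_add_left hη _
  have hηball : η ∈ Metric.closedBall (0:E) (M + d) := by
    rw [Metric.mem_closedBall, dist_zero_right]; linarith
  have hmvt : ‖V p z - V p η‖ ≤ ((1 + 2 * α) * (1 + (M + d) ^ 2) ^ α) * ‖z - η‖ :=
    Convex.norm_image_sub_le_of_norm_hasFDerivWithin_le
      (fun x _ => (hderiv x).hasFDerivWithinAt)
      (fun x hx => hbound (M + d) x (by simpa [dist_zero_right] using hx))
      (convex_closedBall _ _) hηball hzball
  have hVnorm : ‖V p (z - η)‖ = (1 + d ^ 2) ^ α * d := by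
    rw [show V p (z - η) = ((1 + ‖z - η‖ ^ 2) ^ α) • (z - η) from rfl,
      norm_smul, Real.norm_eq_abs, abs_of_pos (Real.rpow_pos_of_pos (hpos _) α), ← hd]
  have hkey : (1 + (M + d) ^ 2) ^ α ≤ (2 * (1 + M ^ 2)) ^ α * (1 + d ^ 2) ^ α := by
    rw [← Real.mul_rpow (by positivity) (by positivity)]
    exact Real.rpow_le_rpow (by positivity) (by nlinarith [sq_nonneg (M - d), sq_nonneg (M*d)]) hα0
  rw [hVnorm]
  calc ‖V p z - V p η‖ ≤ ((1 + 2 * α) * (1 + (M + d) ^ 2) ^ α) * d := hmvt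
    _ ≤ ((1 + 2 * α) * ((2 * (1 + M ^ 2)) ^ α * (1 + d ^ 2) ^ α)) * d :=
        mul_le_mul_of_nonneg_right
          (mul_le_mul_of_nonneg_left hkey (by linarith)) hd0
    _ = (1 + 2 * α) * (2 * (1 + M ^ 2)) ^ α * ((1 + d ^ 2) ^ α * d) := by ring
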